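/- Let d ∈ ℕ, A a nonempty finite set, η, c, L, K ∈ [0,∞) with cL < 1 and ηL < 1, w : ℝ^d → (0,∞) measurable, f : ℝ^d × ℝ^A → ℝ measurable with |f(x,r) − f(x,s)| ≤ L·max_{a}|r(a)−s(a)| and |f(x,r) − f(y,r)| ≤ K‖x−y‖. Let κ₁^{(a)}, κ₂^{(a)} be stochastic kernels on ℝ^d satisfying, for i ∈ {1,2}: ∫ w(y) κᵢ^{(a)}(x,dy) ≤ c·w(x), ∫ ‖y‖ κᵢ^{(a)}(x,dy) < ∞, sup_{x,a} w(x)^{-1} ∫ |f(y,0)| κᵢ^{(a)}(x,dy) < ∞; and assume W₁(κ₂^{(a)}(x,·), κ₂^{(a)}(y,·)) ≤ η‖x−y‖. If u₁, u₂ are the unique w-bounded solutions of (uᵢ(x))(a) = ∫ f(y, uᵢ(y)) κᵢ^{(a)}(x,dy), then sup_{(x,a)} |u₁(x)(a) − u₂(x)(a)|/w(x) ≤ (K / ((1−ηL)(1−cL))) · sup_{(y,b)} W₁(κ₁^{(b)}(y,·), κ₂^{(b)}(y,·))/w(y). -/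

import Mathlib

open MeasureTheory ProbabilityTheory

/-- The Wasserstein-1 distance between two probability measures on `ℝ^d`, defined as the
infimum over couplings of the integral of the distance. -/
noncomputable def W1 {d : ℕ} (μ ν : Measure (EuclideanSpace ℝ (Fin d))) : ℝ :=
  sInf { r : ℝ | ∃ π : Measure (EuclideanSpace ℝ (Fin d) × EuclideanSpace ℝ (Fin d)),
    IsProbabilityMeasure π ∧ π.map Prod.fst = μ ∧ π.map Prod.snd = ν ∧
    r = ∫ p, ‖p.1 - p.2‖ ∂π }


lemma W1_nonneg {d : ℕ} (μ ν : Measure (EuclideanSpace ℝ (Fin d))) : 0 ≤ W1 μ ν := by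
  apply Real.sInf_nonneg
  rintro r ⟨π, hπ, h1, h2, rfl⟩
  positivity

lemma coupling_bound {d : ℕ} (μ ν : Measure (EuclideanSpace ℝ (Fin d)))
    [IsProbabilityMeasure μ] [IsProbabilityMeasure ν]
    (hμm : Integrable (fun y => ‖y‖) μ) (hνm : Integrable (fun y => ‖y‖) ν)
    (g w : EuclideanSpace ℝ (Fin d) → ℝ) (hg : Measurable g) (hwm : Measurable w)
    (hgμ : Integrable g μ) (hgν : Integrable g ν)
    (hwμ : Integrable w μ) (hwν : Integrable w ν)
    (a b : ℝ) (ha : 0 ≤ a) (hb : 0 ≤ b)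
    (hlip : ∀ y z, |g y - g z| ≤ a * ‖y - z‖ + b * (w y + w z)) :
    |(∫ y, g y ∂μ) - ∫ y, g y ∂ν| ≤ a * W1 μ ν + b * ((∫ y, w y ∂μ) + ∫ y, w y ∂ν) := by
  set T : ℝ := (∫ y, w y ∂μ) + ∫ y, w y ∂ν with hT
  set S := { r : ℝ | ∃ π : Measure (EuclideanSpace ℝ (Fin d) × EuclideanSpace ℝ (Fin d)),
    IsProbabilityMeasure π ∧ π.map Prod.fst = μ ∧ π.map Prod.snd = ν ∧
    r = ∫ p, ‖p.1 - p.2‖ ∂π } with hS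
  have hSne : S.Nonempty := by
    refine ⟨∫ p, ‖p.1 - p.2‖ ∂(μ.prod ν), μ.prod ν, inferInstance, ?_, ?_, rfl⟩
    · simp [Measure.map_fst_prod]
    · simp [Measure.map_snd_prod]
  have key : ∀ r ∈ S, |(∫ y, g y ∂μ) - ∫ y, g y ∂ν| ≤ a * r + b * T := by
    rintro r ⟨π, hπ, h1, h2, rfl⟩
    haveI := hπ
    have hfstm : AEMeasurable (Prod.fst : _ × _ → EuclideanSpace ℝ (Fin d)) π :=
      measurable_fst.aemeasurable
    have hsndm : AEMeasurable (Prod.snd : _ × _ → EuclideanSpace ℝ (Fin d)) π :=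
      measurable_snd.aemeasurable
    -- transfer integrabilities
    have hg1 : Integrable (fun p : _ × _ => g p.1) π := by
      rw [← h1] at hgμ
      exact (integrable_map_measure hg.aestronglyMeasurable hfstm).mp hgμ
    have hg2 : Integrable (fun p : _ × _ => g p.2) π := by
      rw [← h2] at hgν
      exact (integrable_map_measure hg.aestronglyMeasurable hsndm).mp hgν
    have hw1 : Integrable (fun p : _ × _ => w p.1) π := by
      rw [← h1] at hwμ
      exact (integrable_map_measure hwm.aestronglyMeasurable hfstm).mp hwμ
    have hw2 : Integrable (fun p : _ × _ => w p.2) π := by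
      rw [← h2] at hwν
      exact (integrable_map_measure hwm.aestronglyMeasurable hsndm).mp hwν
    have hn1 : Integrable (fun p : _ × _ => ‖p.1‖) π := by
      rw [← h1] at hμm
      exact (integrable_map_measure (measurable_norm.aestronglyMeasurable) hfstm).mp hμm
    have hn2 : Integrable (fun p : _ × _ => ‖p.2‖) π := by
      rw [← h2] at hνm
      exact (integrable_map_measure (measurable_norm.aestronglyMeasurable) hsndm).mp hνm
    have hcost : Integrable (fun p : EuclideanSpace ℝ (Fin d) × EuclideanSpace ℝ (Fin d)
        => ‖p.1 - p.2‖) π := by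
      have hsum : Integrable (fun p : EuclideanSpace ℝ (Fin d) × EuclideanSpace ℝ (Fin d)
          => ‖p.1‖ + ‖p.2‖) π := hn1.add hn2
      refine hsum.mono ((measurable_fst.sub measurable_snd).norm.aestronglyMeasurable)
        (Filter.Eventually.of_forall fun p => ?_)
      simp only [Real.norm_eq_abs, abs_norm,
        abs_of_nonneg (by positivity : (0:ℝ) ≤ ‖p.1‖ + ‖p.2‖)]
      exact norm_sub_le p.1 p.2
    have hwsum : Integrable (fun p : EuclideanSpace ℝ (Fin d) × EuclideanSpace ℝ (Fin d)
        => w p.1 + w p.2) π := hw1.add hw2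
    have hbound : Integrable (fun p : EuclideanSpace ℝ (Fin d) × EuclideanSpace ℝ (Fin d)
        => a * ‖p.1 - p.2‖ + b * (w p.1 + w p.2)) π :=
      (hcost.const_mul a).add (hwsum.const_mul b)
    have hint1 : ∫ y, g y ∂μ = ∫ p, g p.1 ∂π := by
      rw [← h1]; exact integral_map hfstm (hg.aestronglyMeasurable)
    have hint2 : ∫ y, g y ∂ν = ∫ p, g p.2 ∂π := by
      rw [← h2]; exact integral_map hsndm (hg.aestronglyMeasurable)
    have hwint1 : ∫ y, w y ∂μ = ∫ p, w p.1 ∂π := by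
      rw [← h1]; exact integral_map hfstm (hwm.aestronglyMeasurable)
    have hwint2 : ∫ y, w y ∂ν = ∫ p, w p.2 ∂π := by
      rw [← h2]; exact integral_map hsndm (hwm.aestronglyMeasurable)
    rw [hint1, hint2, ← integral_sub hg1 hg2]
    calc |∫ p, (g p.1 - g p.2) ∂π| ≤ ∫ p, |g p.1 - g p.2| ∂π := by
          simpa [Real.norm_eq_abs] using
            norm_integral_le_integral_norm (fun p : EuclideanSpace ℝ (Fin d) ×
              EuclideanSpace ℝ (Fin d) => g p.1 - g p.2) (μ := π)
      _ ≤ ∫ p, (a * ‖p.1 - p.2‖ + b * (w p.1 + w p.2)) ∂π := by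
          refine integral_mono ((hg1.sub hg2).abs) hbound fun p => hlip p.1 p.2
      _ = a * (∫ p, ‖p.1 - p.2‖ ∂π) + b * T := by
          rw [integral_add (hcost.const_mul a) (hwsum.const_mul b),
            integral_const_mul, integral_const_mul, integral_add hw1 hw2, hT, hwint1, hwint2]
  rcases eq_or_lt_of_le ha with rfl | hapos
  · obtain ⟨r, hr⟩ := hSne
    have := key r hr
    simpa using this
  · have hW : (|(∫ y, g y ∂μ) - ∫ y, g y ∂ν| - b * T) / a ≤ W1 μ ν := by
      apply le_csInf hSne
      intro r hr
      rw [div_le_iff₀ hapos]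
      have := key r hr
      linarith [mul_comm r a]
    rw [div_le_iff₀ hapos] at hW
    linarith [mul_comm (W1 μ ν) a]


/-- **Stability of stochastic fixed point equations with respect to the kernels.**
If `u₁, u₂` are the unique `w`-bounded solutions of the fixed point equations for the same
nonlinearity `f` but different kernels `κ₁, κ₂`, then the weighted distance of `u₁` and `u₂`
is controlled by the weighted Wasserstein-1 distance of the kernels. -/
theorem stmt_2 {d : ℕ} {A : Type*} [Fintype A] [Nonempty A]
    (η c L K : ℝ) (hη : 0 ≤ η) (hc : 0 ≤ c) (hL : 0 ≤ L) (hK : 0 ≤ K)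
    (hcL : c * L < 1) (hηL : η * L < 1)
    (w : EuclideanSpace ℝ (Fin d) → ℝ) (hw : Measurable w) (hwpos : ∀ x, 0 < w x)
    (f : EuclideanSpace ℝ (Fin d) → (A → ℝ) → ℝ)
    (hfm : Measurable (fun p : EuclideanSpace ℝ (Fin d) × (A → ℝ) => f p.1 p.2))
    (hflip : ∀ x r s, |f x r - f x s| ≤ L * ⨆ a, |r a - s a|)
    (hfxlip : ∀ x y r, |f x r - f y r| ≤ K * ‖x - y‖)
    (κ₁ κ₂ : A → Kernel (EuclideanSpace ℝ (Fin d)) (EuclideanSpace ℝ (Fin d)))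
    (hκ₁ : ∀ a, IsMarkovKernel (κ₁ a)) (hκ₂ : ∀ a, IsMarkovKernel (κ₂ a))
    (hwint₁ : ∀ a x, Integrable w (κ₁ a x)) (hwint₂ : ∀ a x, Integrable w (κ₂ a x))
    (hwbd₁ : ∀ a x, ∫ y, w y ∂(κ₁ a x) ≤ c * w x)
    (hwbd₂ : ∀ a x, ∫ y, w y ∂(κ₂ a x) ≤ c * w x)
    (hmom₁ : ∀ a x, Integrable (fun y => ‖y‖) (κ₁ a x))
    (hmom₂ : ∀ a x, Integrable (fun y => ‖y‖) (κ₂ a x))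
    (hf0int₁ : ∀ a x, Integrable (fun y => f y 0) (κ₁ a x))
    (hf0int₂ : ∀ a x, Integrable (fun y => f y 0) (κ₂ a x))
    (hf0bd₁ : ∃ C, ∀ a x, ∫ y, |f y 0| ∂(κ₁ a x) ≤ C * w x)
    (hf0bd₂ : ∃ C, ∀ a x, ∫ y, |f y 0| ∂(κ₂ a x) ≤ C * w x)
    (hκ₂lip : ∀ a x y, W1 (κ₂ a x) (κ₂ a y) ≤ η * ‖x - y‖)
    (u₁ u₂ : EuclideanSpace ℝ (Fin d) → A → ℝ)
    (hu₁m : ∀ a, Measurable fun x => u₁ x a)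
    (hu₂m : ∀ a, Measurable fun x => u₂ x a)
    (hu₁bdd : ∃ C, ∀ x a, |u₁ x a| ≤ C * w x)
    (hu₂bdd : ∃ C, ∀ x a, |u₂ x a| ≤ C * w x)
    (hu₁int : ∀ a x, Integrable (fun y => f y (u₁ y)) (κ₁ a x))
    (hu₂int : ∀ a x, Integrable (fun y => f y (u₂ y)) (κ₂ a x))
    (hu₁fix : ∀ a x, u₁ x a = ∫ y, f y (u₁ y) ∂(κ₁ a x))
    (hu₂fix : ∀ a x, u₂ x a = ∫ y, f y (u₂ y) ∂(κ₂ a x))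
    (D : ℝ) (hD : ∀ b y, W1 (κ₁ b y) (κ₂ b y) ≤ D * w y) :
    ∀ x a, |u₁ x a - u₂ x a| ≤ K / ((1 - η * L) * (1 - c * L)) * D * w x := by
  obtain ⟨C₁, hC₁⟩ := hu₁bdd
  obtain ⟨C₂, hC₂⟩ := hu₂bdd
  obtain ⟨a₀⟩ := (inferInstance : Nonempty A)
  have h1ηL : 0 < 1 - η * L := by linarith
  have h1cL : 0 < 1 - c * L := by linarith
  set Sinf := η * K / (1 - η * L) with hSinfdef
  have hSinf0 : 0 ≤ Sinf := by positivity
  have hu₂meas : Measurable u₂ := measurable_pi_lambda _ hu₂m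
  set g : EuclideanSpace ℝ (Fin d) → ℝ := fun y => f y (u₂ y) with hgdef
  have hgm : Measurable g := hfm.comp (measurable_id.prodMk hu₂meas)
  -- Step 1: approximate Lipschitz bound for u₂
  have step1 : ∀ t, 0 < t → ∀ x y a, |u₂ x a - u₂ y a| ≤ Sinf * (‖x - y‖ + t * (w x + w y)) := by
    intro t ht
    set F : EuclideanSpace ℝ (Fin d) × EuclideanSpace ℝ (Fin d) × A → ℝ := fun q =>
      |u₂ q.1 q.2.2 - u₂ q.2.1 q.2.2| / (‖q.1 - q.2.1‖ + t * (w q.1 + w q.2.1)) with hFdef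
    have hden : ∀ (x y : EuclideanSpace ℝ (Fin d)), 0 < ‖x - y‖ + t * (w x + w y) := by
      intro x y
      have h1 := hwpos x; have h2 := hwpos y; have h3 := norm_nonneg (x - y)
      nlinarith
    have hbdd : BddAbove (Set.range F) := by
      refine ⟨C₂ / t, ?_⟩
      rintro r ⟨⟨x, y, a⟩, rfl⟩
      rw [hFdef]
      dsimp only
      rw [div_le_div_iff₀ (hden x y) ht]
      have hb1 := hC₂ x a; have hb2 := hC₂ y a
      have habs : |u₂ x a - u₂ y a| ≤ C₂ * (w x + w y) := by
        have := abs_sub_abs_le_abs_sub (u₂ x a) (u₂ y a)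
        have := abs_sub (u₂ x a) (u₂ y a)
        calc |u₂ x a - u₂ y a| ≤ |u₂ x a| + |u₂ y a| := abs_sub _ _
          _ ≤ C₂ * w x + C₂ * w y := add_le_add hb1 hb2
          _ = C₂ * (w x + w y) := by ring
      have hC₂0 : 0 ≤ C₂ := by
        have := (abs_nonneg (u₂ x a)).trans (hC₂ x a)
        nlinarith [hwpos x]
      have hn := norm_nonneg (x - y)
      have hwx := hwpos x; have hwy := hwpos y
      nlinarith
    set St := sSup (Set.range F) with hStdef
    have hFle : ∀ q, F q ≤ St := fun q => le_csSup hbdd (Set.mem_range_self q)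
    have hFnonneg : ∀ q, 0 ≤ F q := by
      rintro ⟨x, y, a⟩
      exact div_nonneg (abs_nonneg _) (hden x y).le
    have hSt0 : 0 ≤ St := (hFnonneg ⟨0, 0, a₀⟩).trans (hFle _)
    have hu₂diff : ∀ y' z' a', |u₂ y' a' - u₂ z' a'| ≤ St * (‖y' - z'‖ + t * (w y' + w z')) := by
      intro y' z' a'
      have h := hFle (y', z', a')
      rw [hFdef] at h
      dsimp only at h
      rw [div_le_iff₀ (hden y' z')] at h
      linarith [h]
    have hglip : ∀ y' z', |g y' - g z'| ≤
        (K + L * St) * ‖y' - z'‖ + (L * St * t) * (w y' + w z') := by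
      intro y' z'
      have h1 : |f y' (u₂ y') - f z' (u₂ y')| ≤ K * ‖y' - z'‖ := hfxlip y' z' (u₂ y')
      have h2 : |f z' (u₂ y') - f z' (u₂ z')| ≤ L * ⨆ a, |u₂ y' a - u₂ z' a| := hflip z' _ _
      have h3 : (⨆ a, |u₂ y' a - u₂ z' a|) ≤ St * (‖y' - z'‖ + t * (w y' + w z')) :=
        ciSup_le fun a' => hu₂diff y' z' a'
      calc |g y' - g z'| ≤ |f y' (u₂ y') - f z' (u₂ y')| + |f z' (u₂ y') - f z' (u₂ z')| := by
            rw [hgdef]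
            exact abs_sub_le _ _ _
        _ ≤ K * ‖y' - z'‖ + L * (St * (‖y' - z'‖ + t * (w y' + w z'))) :=
            add_le_add h1 (h2.trans (mul_le_mul_of_nonneg_left h3 hL))
        _ = (K + L * St) * ‖y' - z'‖ + (L * St * t) * (w y' + w z') := by ring
    have hmain : ∀ x y a, |u₂ x a - u₂ y a| ≤
        (K + L * St) * (η * ‖x - y‖) + (L * St * t) * (c * w x + c * w y) := by
      intro x y a
      haveI := hκ₂ a
      have hgx : Integrable g ((κ₂ a) x) := hu₂int a x
      have hgy : Integrable g ((κ₂ a) y) := hu₂int a y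
      have key := coupling_bound ((κ₂ a) x) ((κ₂ a) y) (hmom₂ a x) (hmom₂ a y) g w hgm hw
        hgx hgy (hwint₂ a x) (hwint₂ a y) (K + L * St) (L * St * t)
        (by positivity) (by positivity) hglip
      have hfix : u₂ x a - u₂ y a = (∫ z, g z ∂((κ₂ a) x)) - ∫ z, g z ∂((κ₂ a) y) := by
        rw [hu₂fix a x, hu₂fix a y]
      rw [hfix]
      refine key.trans ?_
      have hW := hκ₂lip a x y
      have hw1 := hwbd₂ a x
      have hw2 := hwbd₂ a y
      have hKL : (0:ℝ) ≤ K + L * St := by positivity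
      have hLSt : (0:ℝ) ≤ L * St * t := by positivity
      have := mul_le_mul_of_nonneg_left hW hKL
      have := mul_le_mul_of_nonneg_left (add_le_add hw1 hw2) hLSt
      linarith
    have hStle : St ≤ max (η * (K + L * St)) (c * L * St) := by
      apply csSup_le ⟨F (0, 0, a₀), Set.mem_range_self _⟩
      rintro r ⟨⟨x, y, a⟩, rfl⟩
      rw [hFdef]
      dsimp only
      rw [div_le_iff₀ (hden x y)]
      have h := hmain x y a
      have hM1 : η * (K + L * St) ≤ max (η * (K + L * St)) (c * L * St) := le_max_left _ _
      have hM2 : c * L * St ≤ max (η * (K + L * St)) (c * L * St) := le_max_right _ _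
      have hn := norm_nonneg (x - y)
      have hwx := (hwpos x).le; have hwy := (hwpos y).le
      have e1 : (K + L * St) * (η * ‖x - y‖) = (η * (K + L * St)) * ‖x - y‖ := by ring
      have e2 : (L * St * t) * (c * w x + c * w y) = (c * L * St) * (t * (w x + w y)) := by ring
      calc |u₂ x a - u₂ y a| ≤
          (K + L * St) * (η * ‖x - y‖) + (L * St * t) * (c * w x + c * w y) := h
        _ ≤ (max (η * (K + L * St)) (c * L * St)) * ‖x - y‖ +
            (max (η * (K + L * St)) (c * L * St)) * (t * (w x + w y)) := by
            rw [e1, e2]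
            have ht' : 0 ≤ t * (w x + w y) := by positivity
            exact add_le_add (mul_le_mul_of_nonneg_right hM1 hn)
              (mul_le_mul_of_nonneg_right hM2 ht')
        _ = (max (η * (K + L * St)) (c * L * St)) * (‖x - y‖ + t * (w x + w y)) := by ring
    have hStSinf : St ≤ Sinf := by
      rcases max_cases (η * (K + L * St)) (c * L * St) with ⟨hmx, _⟩ | ⟨hmx, _⟩
      · rw [hmx] at hStle
        rw [hSinfdef, le_div_iff₀ h1ηL]
        nlinarith
      · rw [hmx] at hStle
        have : St ≤ 0 := by nlinarith
        linarith
    intro x y a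
    exact (hu₂diff x y a).trans (mul_le_mul_of_nonneg_right hStSinf (hden x y).le)
  -- Step 2: u₂ is Lipschitz
  have hu₂lip : ∀ x y a, |u₂ x a - u₂ y a| ≤ Sinf * ‖x - y‖ := by
    intro x y a
    apply le_of_forall_pos_le_add
    intro ε hε
    have hwx := hwpos x; have hwy := hwpos y
    set X := Sinf * (w x + w y) with hXdef
    have hX0 : 0 ≤ X := by positivity
    have hXε : 0 < X + ε := by linarith
    set t := ε / (X + ε) with htdef
    have ht : 0 < t := div_pos hε hXε
    have h := step1 t ht x y a
    have hXt : X * t ≤ ε := by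
      rw [htdef, mul_div_assoc']
      rw [div_le_iff₀ hXε]
      nlinarith
    calc |u₂ x a - u₂ y a| ≤ Sinf * (‖x - y‖ + t * (w x + w y)) := h
      _ = Sinf * ‖x - y‖ + X * t := by rw [hXdef]; ring
      _ ≤ Sinf * ‖x - y‖ + ε := by linarith
  -- g is Lipschitz with constant M₂
  set M₂ := K + L * Sinf with hM₂def
  have hM₂0 : 0 ≤ M₂ := by positivity
  have hglipM : ∀ y z, |g y - g z| ≤ M₂ * ‖y - z‖ := by
    intro y z
    have h1 : |f y (u₂ y) - f z (u₂ y)| ≤ K * ‖y - z‖ := hfxlip y z (u₂ y)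
    have h2 : |f z (u₂ y) - f z (u₂ z)| ≤ L * ⨆ a, |u₂ y a - u₂ z a| := hflip z _ _
    have h3 : (⨆ a, |u₂ y a - u₂ z a|) ≤ Sinf * ‖y - z‖ := ciSup_le fun a => hu₂lip y z a
    calc |g y - g z| ≤ |f y (u₂ y) - f z (u₂ y)| + |f z (u₂ y) - f z (u₂ z)| := by
          rw [hgdef]; exact abs_sub_le _ _ _
      _ ≤ K * ‖y - z‖ + L * (Sinf * ‖y - z‖) :=
          add_le_add h1 (h2.trans (mul_le_mul_of_nonneg_left h3 hL))
      _ = M₂ * ‖y - z‖ := by rw [hM₂def]; ring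
  -- g is integrable with respect to κ₁
  have hgint₁ : ∀ a x, Integrable g ((κ₁ a) x) := by
    intro a x
    haveI := hκ₁ a
    have hInt : Integrable (fun y : EuclideanSpace ℝ (Fin d) => |g 0| + M₂ * ‖y‖) ((κ₁ a) x) :=
      (integrable_const _).add ((hmom₁ a x).const_mul M₂)
    refine hInt.mono hgm.aestronglyMeasurable (Filter.Eventually.of_forall fun y => ?_)
    have h1 : |g y| - |g 0| ≤ |g y - g 0| := abs_sub_abs_le_abs_sub _ _
    have h2 : |g y - g 0| ≤ M₂ * ‖y - 0‖ := hglipM y 0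
    rw [sub_zero] at h2
    have h3 : ‖g y‖ = |g y| := Real.norm_eq_abs _
    have h4 : 0 ≤ |g 0| + M₂ * ‖y‖ := by positivity
    rw [h3, Real.norm_eq_abs, abs_of_nonneg h4]
    linarith
  -- The weighted distance Δ
  set G : EuclideanSpace ℝ (Fin d) × A → ℝ := fun p => |u₁ p.1 p.2 - u₂ p.1 p.2| / w p.1
    with hGdef
  have hGbdd : BddAbove (Set.range G) := by
    refine ⟨C₁ + C₂, ?_⟩
    rintro r ⟨⟨x, a⟩, rfl⟩
    rw [hGdef]
    dsimp only
    rw [div_le_iff₀ (hwpos x)]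
    calc |u₁ x a - u₂ x a| ≤ |u₁ x a| + |u₂ x a| := abs_sub _ _
      _ ≤ C₁ * w x + C₂ * w x := add_le_add (hC₁ x a) (hC₂ x a)
      _ = (C₁ + C₂) * w x := by ring
  set Δ := sSup (Set.range G) with hΔdef
  have hGle : ∀ p, G p ≤ Δ := fun p => le_csSup hGbdd (Set.mem_range_self p)
  have hΔ0 : 0 ≤ Δ := by
    have h0 : (0:ℝ) ≤ G (0, a₀) := div_nonneg (abs_nonneg _) (hwpos 0).le
    exact h0.trans (hGle _)
  have hdiff : ∀ x a, |u₁ x a - u₂ x a| ≤ Δ * w x := by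
    intro x a
    have h := hGle (x, a)
    rw [hGdef] at h
    dsimp only at h
    rw [div_le_iff₀ (hwpos x)] at h
    linarith
  have hD0 : 0 ≤ D := by
    have h1 := (W1_nonneg ((κ₁ a₀) 0) ((κ₂ a₀) 0)).trans (hD a₀ 0)
    nlinarith [hwpos (0 : EuclideanSpace ℝ (Fin d))]
  -- Main estimate
  have hmain : ∀ x a, |u₁ x a - u₂ x a| ≤ c * L * Δ * w x + M₂ * (D * w x) := by
    intro x a
    haveI := hκ₁ a
    haveI := hκ₂ a
    have hI1 : Integrable (fun y => f y (u₁ y)) ((κ₁ a) x) := hu₁int a x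
    have hI2 : Integrable g ((κ₁ a) x) := hgint₁ a x
    have e : u₁ x a - u₂ x a = (∫ y, (f y (u₁ y) - g y) ∂((κ₁ a) x)) +
        ((∫ y, g y ∂((κ₁ a) x)) - ∫ y, g y ∂((κ₂ a) x)) := by
      rw [hu₁fix a x, hu₂fix a x, integral_sub hI1 hI2]
      ring
    have hb1 : |∫ y, (f y (u₁ y) - g y) ∂((κ₁ a) x)| ≤ c * L * Δ * w x := by
      have hpt : ∀ y, |f y (u₁ y) - g y| ≤ L * Δ * w y := by
        intro y
        refine (hflip y (u₁ y) (u₂ y)).trans ?_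
        have h3 : (⨆ b, |u₁ y b - u₂ y b|) ≤ Δ * w y := ciSup_le fun b => hdiff y b
        calc L * (⨆ b, |u₁ y b - u₂ y b|) ≤ L * (Δ * w y) :=
              mul_le_mul_of_nonneg_left h3 hL
          _ = L * Δ * w y := by ring
      calc |∫ y, (f y (u₁ y) - g y) ∂((κ₁ a) x)|
          ≤ ∫ y, |f y (u₁ y) - g y| ∂((κ₁ a) x) := by
            simpa [Real.norm_eq_abs] using
              norm_integral_le_integral_norm (μ := (κ₁ a) x) (fun y => f y (u₁ y) - g y)
        _ ≤ ∫ y, L * Δ * w y ∂((κ₁ a) x) :=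
            integral_mono (hI1.sub hI2).abs ((hwint₁ a x).const_mul (L * Δ)) hpt
        _ = L * Δ * ∫ y, w y ∂((κ₁ a) x) := integral_const_mul _ _
        _ ≤ L * Δ * (c * w x) := mul_le_mul_of_nonneg_left (hwbd₁ a x) (by positivity)
        _ = c * L * Δ * w x := by ring
    have hb2 : |(∫ y, g y ∂((κ₁ a) x)) - ∫ y, g y ∂((κ₂ a) x)| ≤ M₂ * (D * w x) := by
      have key := coupling_bound ((κ₁ a) x) ((κ₂ a) x) (hmom₁ a x) (hmom₂ a x) g w hgm hw
        hI2 (hu₂int a x) (hwint₁ a x) (hwint₂ a x) M₂ 0 hM₂0 le_rfl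
        (fun y z => by
          have := hglipM y z
          simpa using this.trans (by nlinarith [norm_nonneg (y - z)]))
      refine key.trans ?_
      have hWD := hD a x
      have := mul_le_mul_of_nonneg_left hWD hM₂0
      linarith
    calc |u₁ x a - u₂ x a| = |(∫ y, (f y (u₁ y) - g y) ∂((κ₁ a) x)) +
          ((∫ y, g y ∂((κ₁ a) x)) - ∫ y, g y ∂((κ₂ a) x))| := by rw [← e]
      _ ≤ |∫ y, (f y (u₁ y) - g y) ∂((κ₁ a) x)| +
          |(∫ y, g y ∂((κ₁ a) x)) - ∫ y, g y ∂((κ₂ a) x)| := abs_add_le _ _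
      _ ≤ c * L * Δ * w x + M₂ * (D * w x) := add_le_add hb1 hb2
  -- Close the loop
  have hΔle : Δ ≤ c * L * Δ + M₂ * D := by
    apply csSup_le ⟨G (0, a₀), Set.mem_range_self _⟩
    rintro r ⟨⟨x, a⟩, rfl⟩
    rw [hGdef]
    dsimp only
    rw [div_le_iff₀ (hwpos x)]
    calc |u₁ x a - u₂ x a| ≤ c * L * Δ * w x + M₂ * (D * w x) := hmain x a
      _ = (c * L * Δ + M₂ * D) * w x := by ring
  have hΔfin : Δ ≤ M₂ * D / (1 - c * L) := by
    rw [le_div_iff₀ h1cL]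
    nlinarith
  intro x a
  have hfinal : M₂ * D / (1 - c * L) = K / ((1 - η * L) * (1 - c * L)) * D := by
    have hM : M₂ = K / (1 - η * L) := by
      rw [hM₂def, hSinfdef]
      rw [eq_div_iff h1ηL.ne', add_mul, mul_div_assoc', div_mul_cancel₀ _ h1ηL.ne']
      ring
    rw [hM]
    rw [div_mul_eq_mul_div, div_div, div_mul_eq_mul_div]
  calc |u₁ x a - u₂ x a| ≤ Δ * w x := hdiff x a
    _ ≤ (M₂ * D / (1 - c * L)) * w x := mul_le_mul_of_nonneg_right hΔfin (hwpos x).le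
    _ = K / ((1 - η * L) * (1 - c * L)) * D * w x := by rw [hfinal]
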